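/- arXiv:2005.01835 — 2 statements merged into one kernel-verified Lean document; each statement's English description precedes it below -/
import Mathlib

section
/- For a square-integrable random variable Y and a forecast X (a random variable on the same probability space), the mean squared error decomposes as E[(X-Y)^2] = Var(Y) - Var(E[Y|X]) + E[(X - E[Y|X])^2]. (Murphy decomposition for squared error loss: uncertainty minus resolution plus miscalibration.) -/
open MeasureTheory ProbabilityTheory

private lemma memℒp_two_condexp_aux {Ω : Type*} {m m0 : MeasurableSpace Ω} (hm : m ≤ m0)
    (P : Measure Ω) [IsProbabilityMeasure P] (Y : Ω → ℝ) (hY2 : MemLp Y 2 P) :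
    MemLp (condExp m P Y) 2 P := by
  have hYint : Integrable Y P := hY2.integrable (by norm_num)
  have hg : MemLp (((condExpL2 ℝ ℝ hm (hY2.toLp Y) : lpMeas ℝ ℝ m 2 P) : Lp ℝ 2 P) : Ω → ℝ)
      2 P := Lp.memLp _
  refine hg.ae_eq ?_
  refine ae_eq_condExp_of_forall_setIntegral_eq hm hYint
    (fun s _ _ => (hg.integrable (by norm_num)).integrableOn) (fun s hs hμs => ?_)
    (lpMeas.aestronglyMeasurable _)
  rw [integral_condExpL2_eq_of_fin_meas_real _ hs hμs.ne]
  exact setIntegral_congr_ae (hm s hs) (hY2.coeFn_toLp.mono fun x hx _ => hx)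

/-- Murphy decomposition for squared error loss:
`E[(X-Y)^2] = Var(Y) - Var(E[Y|X]) + E[(X - E[Y|X])^2]`. -/
theorem murphy_decomposition_sq {Ω : Type*} [MeasurableSpace Ω] (P : Measure Ω)
    [IsProbabilityMeasure P] (X Y : Ω → ℝ) (hX : Measurable X)
    (hX2 : MemLp X 2 P) (hY2 : MemLp Y 2 P) :
    ∫ ω, (X ω - Y ω) ^ 2 ∂P
      = variance Y P - variance (condExp (MeasurableSpace.comap X (borel ℝ)) P Y) P
        + ∫ ω, (X ω - condExp (MeasurableSpace.comap X (borel ℝ)) P Y ω) ^ 2 ∂P := by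
  have hm : MeasurableSpace.comap X (borel ℝ) ≤ (by infer_instance : MeasurableSpace Ω) :=
    hX.comap_le
  have hZ2 : MemLp (condExp (MeasurableSpace.comap X (borel ℝ)) P Y) 2 P :=
    memℒp_two_condexp_aux hm P Y hY2
  set m := MeasurableSpace.comap X (borel ℝ) with hm_def
  haveI : SigmaFinite (P.trim hm) := by infer_instance
  set Z := condExp m P Y with hZ_def
  have hYint : Integrable Y P := hY2.integrable (by norm_num)
  -- products of two L² functions are integrable
  have hmul_int : ∀ f g : Ω → ℝ, MemLp f 2 P → MemLp g 2 P → Integrable (f * g) P := by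
    intro f g hf hg
    have h : MemLp (f • g) 1 P :=
      hg.smul hf (hpqr := ⟨by simpa using ENNReal.inv_two_add_inv_two⟩)
    exact memLp_one_iff_integrable.mp h
  have hXm : StronglyMeasurable[m] X :=
    (Measurable.of_comap_le le_rfl).stronglyMeasurable
  have hXY : Integrable (X * Y) P := hmul_int X Y hX2 hY2
  have hXZ : Integrable (X * Z) P := hmul_int X Z hX2 hZ2
  have hmul : ∫ ω, X ω * Y ω ∂P = ∫ ω, X ω * Z ω ∂P := by
    have h := condExp_mul_of_stronglyMeasurable_left hXm hXY hYint
    calc ∫ ω, X ω * Y ω ∂P = ∫ ω, (P[X * Y | m]) ω ∂P := (integral_condExp hm).symm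
      _ = ∫ ω, X ω * Z ω ∂P := integral_congr_ae h
  have hEZ : ∫ ω, Z ω ∂P = ∫ ω, Y ω ∂P := integral_condExp hm
  have expand : ∀ f g : Ω → ℝ, Integrable (fun ω => f ω ^ 2) P →
      Integrable (fun ω => g ω ^ 2) P → Integrable (f * g) P →
      ∫ ω, (f ω - g ω) ^ 2 ∂P
        = ∫ ω, f ω ^ 2 ∂P - 2 * ∫ ω, f ω * g ω ∂P + ∫ ω, g ω ^ 2 ∂P := by
    intro f g hf hg hfg
    have h1 : ∀ ω, (f ω - g ω) ^ 2 = f ω ^ 2 - 2 * (f ω * g ω) + g ω ^ 2 := by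
      intro ω; ring
    have hfg2 : Integrable (fun ω => 2 * (f ω * g ω)) P := hfg.const_mul 2
    have h2 : Integrable (fun ω => f ω ^ 2 - 2 * (f ω * g ω)) P := hf.sub hfg2
    simp_rw [h1]
    rw [integral_add h2 hg, integral_sub hf hfg2, integral_const_mul]
  rw [expand X Y hX2.integrable_sq hY2.integrable_sq hXY,
    expand X Z hX2.integrable_sq hZ2.integrable_sq hXZ,
    variance_eq_sub hY2, variance_eq_sub hZ2, hEZ, hmul]
  simp only [Pi.pow_apply]
  ring
end

section
/- If a mean forecast X is autocalibrated, i.e. X = E[Y|X] almost surely, then the expected squared error satisfies E[(X-Y)^2] = Var(Y) - Var(X). In particular, among autocalibrated mean forecasts, minimizing mean squared error is equivalent to maximizing the variance of the forecast. -/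
open MeasureTheory ProbabilityTheory

/-- If a mean forecast `X` is autocalibrated, `X = E[Y|X]` a.s., then
`E[(X-Y)^2] = Var(Y) - Var(X)`. -/
theorem autocalibrated_mse {Ω : Type*} [MeasurableSpace Ω] (P : Measure Ω)
    [IsProbabilityMeasure P] (X Y : Ω → ℝ) (hX : Measurable X)
    (hX2 : MemLp X 2 P) (hY2 : MemLp Y 2 P)
    (hcal : X =ᵐ[P] condExp (MeasurableSpace.comap X (borel ℝ)) P Y) :
    ∫ ω, (X ω - Y ω) ^ 2 ∂P = variance Y P - variance X P := by
  have hm : MeasurableSpace.comap X (borel ℝ) ≤ ‹MeasurableSpace Ω› := hX.comap_le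
  have hXm : StronglyMeasurable[MeasurableSpace.comap X (borel ℝ)] X :=
    (Measurable.stronglyMeasurable (fun s hs => ⟨s, hs, rfl⟩))
  have hYint : Integrable Y P := hY2.integrable one_le_two
  have hXint : Integrable X P := hX2.integrable one_le_two
  have hX2int : Integrable (fun ω => X ω ^ 2) P := hX2.integrable_sq
  have hY2int : Integrable (fun ω => Y ω ^ 2) P := hY2.integrable_sq
  have hXYmem : MemLp (X * Y) 1 P := by
    have := hY2.smul (φ := X) hX2 (r := 1)
    simpa [Pi.smul_def, smul_eq_mul] using this
  have hXYint : Integrable (X * Y) P := (memLp_one_iff_integrable).1 hXYmem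
  -- E[X] = E[Y]
  have hEX : ∫ ω, X ω ∂P = ∫ ω, Y ω ∂P := by
    rw [integral_congr_ae hcal, integral_condExp hm]
  -- E[XY] = E[X²]
  have hEXY : ∫ ω, X ω * Y ω ∂P = ∫ ω, X ω ^ 2 ∂P := by
    have h1 : ∫ ω, (X * Y) ω ∂P
        = ∫ ω, condExp (MeasurableSpace.comap X (borel ℝ)) P (X * Y) ω ∂P :=
      (integral_condExp hm).symm
    have h2 : condExp (MeasurableSpace.comap X (borel ℝ)) P (X * Y)
        =ᵐ[P] X * condExp (MeasurableSpace.comap X (borel ℝ)) P Y :=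
      condExp_mul_of_stronglyMeasurable_left hXm hXYint hYint
    have h3 : X * condExp (MeasurableSpace.comap X (borel ℝ)) P Y
        =ᵐ[P] fun ω => X ω ^ 2 := by
      filter_upwards [hcal] with ω hω
      simp [Pi.mul_apply, ← hω, sq]
    calc ∫ ω, X ω * Y ω ∂P
        = ∫ ω, condExp (MeasurableSpace.comap X (borel ℝ)) P (X * Y) ω ∂P := h1
      _ = ∫ ω, (X * condExp (MeasurableSpace.comap X (borel ℝ)) P Y) ω ∂P :=
          integral_congr_ae h2
      _ = ∫ ω, X ω ^ 2 ∂P := integral_congr_ae h3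
  have hexp : ∫ ω, (X ω - Y ω) ^ 2 ∂P
      = ∫ ω, X ω ^ 2 ∂P - 2 * ∫ ω, X ω * Y ω ∂P + ∫ ω, Y ω ^ 2 ∂P := by
    have h2int : Integrable (fun ω => 2 * (X ω * Y ω)) P := hXYint.const_mul 2
    have hfint : Integrable (fun ω => X ω ^ 2 - 2 * (X ω * Y ω)) P := hX2int.sub h2int
    have this : (fun ω => (X ω - Y ω) ^ 2)
        = fun ω => X ω ^ 2 - 2 * (X ω * Y ω) + Y ω ^ 2 := by
      funext ω; ring
    rw [this, integral_add hfint hY2int, integral_sub hX2int h2int, integral_const_mul]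
  rw [variance_eq_sub hY2, variance_eq_sub hX2, hexp, hEXY, ← hEX]
  simp only [Pi.pow_apply]
  ring
end
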